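/- Let R be a commutative Noetherian ring and i : M → E a morphism of R-modules. Then i is an injective envelope if and only if E is injective, i is a monomorphism, and the induced map Hom_{R_p}(k(p), i_p) : Hom_{R_p}(k(p), M_p) → Hom_{R_p}(k(p), E_p) is an isomorphism for all p ∈ Spec R. -/

import Mathlib

universe u

variable (R : Type u) [CommRing R]

/-- A morphism `f : F → M` with `F` flat is a flat precover if every morphism from a
flat module to `M` factors through `f`. -/
def IsFlatPrecover {F M : Type u} [AddCommGroup F] [AddCommGroup M] [Module R F]
    [Module R M] (f : F →ₗ[R] M) : Prop :=
  Module.Flat R F ∧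
    ∀ (F' : Type u) [AddCommGroup F'] [Module R F'], Module.Flat R F' →
      ∀ g : F' →ₗ[R] M, ∃ h : F' →ₗ[R] F, f ∘ₗ h = g

/-- A flat precover `f : F → M` is a flat cover if every `h : F → F` with `f ∘ h = f`
is an automorphism. -/
def IsFlatCover {F M : Type u} [AddCommGroup F] [AddCommGroup M] [Module R F]
    [Module R M] (f : F →ₗ[R] M) : Prop :=
  IsFlatPrecover R f ∧ ∀ h : F →ₗ[R] F, f ∘ₗ h = f → Function.Bijective h

/-- A morphism `i : M → E` is an injective envelope if `E` is injective, `i` is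
injective, and the image of `i` is an essential submodule of `E`. -/
def IsInjectiveEnvelope {M E : Type u} [AddCommGroup M] [AddCommGroup E] [Module R M]
    [Module R E] (i : M →ₗ[R] E) : Prop :=
  Module.Injective R E ∧ Function.Injective i ∧
    ∀ N : Submodule R E, N ≠ ⊥ → N ⊓ LinearMap.range i ≠ ⊥

/-- An injective cogenerator is an injective module `E` such that `Hom(N, E) ≠ 0`
for every nonzero module `N`. -/
def IsInjectiveCogenerator (E : Type u) [AddCommGroup E] [Module R E] : Prop :=
  Module.Injective R E ∧
    ∀ (N : Type u) [AddCommGroup N] [Module R N], (∃ x : N, x ≠ 0) →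
      ∃ g : N →ₗ[R] E, g ≠ 0

section Helpers


variable {R : Type u} [CommRing R] {M E : Type u} [AddCommGroup M] [AddCommGroup E]
  [Module R M] [Module R E]

lemma eq_zero_of_isUnit_smul {A : Type*} [CommRing A] {V : Type*} [AddCommGroup V] [Module A V]
    {u : A} (h : IsUnit u) {v : V} (hv : u • v = 0) : v = 0 := by
  obtain ⟨u', rfl⟩ := h
  have h1 : ((u'⁻¹ : Aˣ) : A) • ((u' : A) • v) = v := by
    rw [smul_smul, Units.inv_mul, one_smul]
  rw [hv, smul_zero] at h1
  exact h1.symm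

lemma mem_of_isUnit_smul {A : Type*} [CommRing A] {V : Type*} [AddCommGroup V] [Module A V]
    {u : A} (h : IsUnit u) {v : V} {N : Submodule A V} (hv : u • v ∈ N) : v ∈ N := by
  obtain ⟨u', rfl⟩ := h
  have h1 : ((u'⁻¹ : Aˣ) : A) • ((u' : A) • v) = v := by
    rw [smul_smul, Units.inv_mul, one_smul]
  rw [← h1]
  exact N.smul_mem _ hv

/-- Lift an element killed by the maximal ideal to a map from the residue field. -/
noncomputable def liftResidue (A : Type*) [CommRing A] [IsLocalRing A] {V : Type*}
    [AddCommGroup V] [Module A V] (v : V)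
    (hv : IsLocalRing.maximalIdeal A ≤ LinearMap.ker (LinearMap.toSpanSingleton A V v)) :
    IsLocalRing.ResidueField A →ₗ[A] V :=
  Submodule.liftQ _ (LinearMap.toSpanSingleton A V v) hv

@[simp] lemma liftResidue_mk (A : Type*) [CommRing A] [IsLocalRing A] {V : Type*}
    [AddCommGroup V] [Module A V] (v : V) (hv) (a : A) :
    liftResidue A v hv (Ideal.Quotient.mk _ a) = a • v := rfl

lemma residue_smul_one (A : Type*) [CommRing A] [IsLocalRing A] (a : A) :
    Ideal.Quotient.mk (IsLocalRing.maximalIdeal A) a = a • (1 : IsLocalRing.ResidueField A) := by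
  have h := ((IsLocalRing.maximalIdeal A).mkQ).map_smul a (1 : A)
  rw [← Algebra.algebraMap_eq_smul_one]; rfl

lemma LocalizedModule.mk_eq_zero_iff {S : Submonoid R} (m : E) (s : S) :
    LocalizedModule.mk m s = 0 ↔ ∃ t : S, (t : R) • m = 0 := by
  constructor
  · intro h
    rw [← LocalizedModule.zero_mk (1 : S), LocalizedModule.mk_eq] at h
    obtain ⟨u, hu⟩ := h
    refine ⟨u, ?_⟩
    simpa [Submonoid.smul_def, smul_smul] using hu
  · rintro ⟨t, ht⟩
    rw [← LocalizedModule.zero_mk (1 : S), LocalizedModule.mk_eq]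
    exact ⟨t, by simp [Submonoid.smul_def, smul_smul, ht]⟩

/-- Key lemma: if the image of `i` is essential in `E`, then any element of `E_p`
killed by the maximal ideal of `R_p` lies in the image of `M_p`. -/
lemma key_essential [IsNoetherianRing R] (p : Ideal R) [hp : p.IsPrime]
    (i : M →ₗ[R] E)
    (hess : ∀ N : Submodule R E, N ≠ ⊥ → N ⊓ LinearMap.range i ≠ ⊥)
    (e : LocalizedModule p.primeCompl E)
    (he : ∀ a ∈ IsLocalRing.maximalIdeal (Localization.AtPrime p), a • e = 0) :
    e ∈ LinearMap.range (LocalizedModule.map p.primeCompl i) := by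
  obtain ⟨x, s, rfl⟩ : ∃ x s, e = LocalizedModule.mk x s :=
    LocalizedModule.induction_on (fun m s => ⟨m, s, rfl⟩) e
  have hs1 : algebraMap R (Localization.AtPrime p) (s : R) • LocalizedModule.mk x s
      = LocalizedModule.mk x (1 : p.primeCompl) := by
    rw [algebraMap_smul, LocalizedModule.smul'_mk, ← Submonoid.smul_def, LocalizedModule.mk_cancel]
  have h1 : ∀ a ∈ IsLocalRing.maximalIdeal (Localization.AtPrime p),
      a • LocalizedModule.mk x (1 : p.primeCompl) = 0 := by
    intro a ha
    rw [← hs1, smul_comm, he a ha, smul_zero]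
  suffices hone : LocalizedModule.mk x (1 : p.primeCompl)
      ∈ LinearMap.range (LocalizedModule.map p.primeCompl i) by
    have hsm : LocalizedModule.mk x s
        = Localization.mk 1 s • LocalizedModule.mk x (1 : p.primeCompl) := by
      rw [LocalizedModule.mk_smul_mk, one_smul, mul_one]
    rw [hsm]
    exact Submodule.smul_mem _ _ hone
  by_cases hx0 : LocalizedModule.mk x (1 : p.primeCompl) = 0
  · rw [hx0]; exact zero_mem _
  obtain ⟨sgen, hsgen⟩ := (IsNoetherian.noetherian p : p.FG)
  have key : ∀ a : {a // a ∈ sgen}, ∃ t : p.primeCompl, (t : R) • ((a : R) • x) = 0 := by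
    intro a
    have hap : (a : R) ∈ p := hsgen ▸ Submodule.subset_span a.2
    have hmax : algebraMap R (Localization.AtPrime p) (a : R)
        ∈ IsLocalRing.maximalIdeal (Localization.AtPrime p) := by
      rw [← Localization.AtPrime.map_eq_maximalIdeal]
      exact Ideal.mem_map_of_mem _ hap
    have := h1 _ hmax
    rw [algebraMap_smul, LocalizedModule.smul'_mk] at this
    exact (LocalizedModule.mk_eq_zero_iff _ _).mp this
  choose t ht using key
  set T : p.primeCompl := ∏ a ∈ sgen.attach, t a with hT
  set x' : E := (T : R) • x with hx'
  have hx'p : ∀ a ∈ p, a • x' = 0 := by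
    have hle : p ≤ LinearMap.ker (LinearMap.toSpanSingleton R E x') := by
      rw [← hsgen, Submodule.span_le]
      intro a ha
      obtain ⟨c, hc⟩ := Finset.dvd_prod_of_mem t (Finset.mem_attach sgen ⟨a, ha⟩)
      simp only [SetLike.mem_coe, LinearMap.mem_ker, LinearMap.toSpanSingleton_apply]
      rw [hx', smul_comm, hT.trans hc]
      push_cast
      rw [mul_comm, mul_smul, ht ⟨a, ha⟩, smul_zero]
    intro a ha
    simpa using hle ha
  have hTu : IsUnit (algebraMap R (Localization.AtPrime p) (T : R)) :=
    IsLocalization.map_units (Localization.AtPrime p) T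
  have hTsm : algebraMap R (Localization.AtPrime p) (T : R)
      • LocalizedModule.mk x (1 : p.primeCompl) = LocalizedModule.mk x' (1 : p.primeCompl) := by
    rw [algebraMap_smul, LocalizedModule.smul'_mk]
  have hx'0 : LocalizedModule.mk x' (1 : p.primeCompl) ≠ 0 := by
    intro h0
    exact hx0 (eq_zero_of_isUnit_smul hTu (hTsm.trans h0))
  have hx'ne : x' ≠ 0 := fun h => hx'0 (by rw [h, LocalizedModule.zero_mk])
  obtain ⟨z, hz, hz0⟩ := (Submodule.ne_bot_iff _).mp
    (hess (Submodule.span R {x'}) (by simpa [Submodule.span_singleton_eq_bot] using hx'ne))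
  obtain ⟨hz1, hz2⟩ := Submodule.mem_inf.mp hz
  obtain ⟨r, rfl⟩ := Submodule.mem_span_singleton.mp hz1
  obtain ⟨w, hw⟩ := hz2
  have hrp : r ∉ p := fun hr => hz0 (hx'p r hr)
  have hmem : LocalizedModule.mk (r • x') (1 : p.primeCompl)
      ∈ LinearMap.range (LocalizedModule.map p.primeCompl i) :=
    ⟨LocalizedModule.mk w 1, by rw [LocalizedModule.map_mk, hw]⟩
  have hru : IsUnit (algebraMap R (Localization.AtPrime p) r) :=
    IsLocalization.map_units (Localization.AtPrime p) (⟨r, hrp⟩ : p.primeCompl)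
  have hrsm : algebraMap R (Localization.AtPrime p) r
      • LocalizedModule.mk x' (1 : p.primeCompl) = LocalizedModule.mk (r • x') 1 := by
    rw [algebraMap_smul, LocalizedModule.smul'_mk]
  have hx'mem := mem_of_isUnit_smul hru (hrsm ▸ hmem)
  exact mem_of_isUnit_smul hTu (hTsm ▸ hx'mem)

end Helpers

/-- Over a commutative Noetherian ring, `i : M → E` is an injective
envelope iff `E` is injective, `i` is a monomorphism, and
`Hom_{R_p}(k(p), i_p)` is an isomorphism for all primes `p`. -/
theorem injectiveEnvelope_iff_residue_hom_bijective [IsNoetherianRing R]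
    {M E : Type u} [AddCommGroup M] [AddCommGroup E] [Module R M] [Module R E]
    (i : M →ₗ[R] E) :
    IsInjectiveEnvelope R i ↔
      Module.Injective R E ∧ Function.Injective i ∧
        ∀ (p : Ideal R) (hp : p.IsPrime),
          Function.Bijective
            (fun g : IsLocalRing.ResidueField (Localization.AtPrime p) →ₗ[Localization.AtPrime p]
                LocalizedModule p.primeCompl M =>
              (LocalizedModule.map p.primeCompl i) ∘ₗ g) := by
  constructor
  · rintro ⟨hE, hinj, hess⟩
    refine ⟨hE, hinj, fun p hp => ?_⟩
    haveI := hp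
    have imap_inj : Function.Injective (LocalizedModule.map p.primeCompl i) :=
      LocalizedModule.map_injective _ i hinj
    constructor
    · intro g g' hgg'
      exact LinearMap.ext fun c => imap_inj (DFunLike.congr_fun hgg' c)
    · intro g
      set e := g 1 with hedef
      have he : ∀ a ∈ IsLocalRing.maximalIdeal (Localization.AtPrime p), a • e = 0 := by
        intro a ha
        have h1 : a • (1 : IsLocalRing.ResidueField (Localization.AtPrime p)) = 0 := by
          rw [← residue_smul_one]
          exact Ideal.Quotient.eq_zero_iff_mem.mpr ha
        rw [hedef, ← g.map_smul, h1, g.map_zero]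
      obtain ⟨m, hm⟩ := key_essential p i hess e he
      have hm_tor : IsLocalRing.maximalIdeal (Localization.AtPrime p)
          ≤ LinearMap.ker (LinearMap.toSpanSingleton (Localization.AtPrime p) _ m) := by
        intro a ha
        simp only [LinearMap.mem_ker, LinearMap.toSpanSingleton_apply]
        apply imap_inj
        rw [(LocalizedModule.map p.primeCompl i).map_smul, hm, he a ha,
          (LocalizedModule.map p.primeCompl i).map_zero]
      refine ⟨liftResidue _ m hm_tor, ?_⟩
      apply LinearMap.ext
      intro c
      obtain ⟨a, rfl⟩ := Ideal.Quotient.mk_surjective c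
      show (LocalizedModule.map p.primeCompl i) (liftResidue _ m hm_tor (Ideal.Quotient.mk _ a)) = _
      rw [liftResidue_mk, (LocalizedModule.map p.primeCompl i).map_smul, hm,
        residue_smul_one, g.map_smul, hedef]
  · rintro ⟨hE, hinj, hbij⟩
    refine ⟨hE, hinj, fun N hN => ?_⟩
    haveI : Nontrivial N := Submodule.nontrivial_iff_ne_bot.mpr hN
    obtain ⟨p, hp, y, hy⟩ := (associatedPrimes.nonempty R N).imp fun _ h => isAssociatedPrime_iff.mp h
    haveI := hp
    have hmem : ∀ r : R, r ∈ p ↔ r • (y : E) = 0 := by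
      intro r
      rw [hy, Submodule.mem_colon_singleton]
      simp [Subtype.ext_iff]
    have htor : IsLocalRing.maximalIdeal (Localization.AtPrime p)
        ≤ LinearMap.ker (LinearMap.toSpanSingleton (Localization.AtPrime p) _
          (LocalizedModule.mk (y : E) (1 : p.primeCompl))) := by
      rw [← Localization.AtPrime.map_eq_maximalIdeal, Ideal.map_le_iff_le_comap]
      intro r hr
      simp only [Ideal.mem_comap, LinearMap.mem_ker, LinearMap.toSpanSingleton_apply]
      rw [algebraMap_smul, LocalizedModule.smul'_mk, (hmem r).mp hr, LocalizedModule.zero_mk]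
    obtain ⟨h, hh⟩ := (hbij p hp).2 (liftResidue _ _ htor)
    have h1 := DFunLike.congr_fun hh (Ideal.Quotient.mk _ (1 : Localization.AtPrime p))
    erw [liftResidue_mk, one_smul] at h1
    obtain ⟨w, s, hws⟩ : ∃ w s, h (Ideal.Quotient.mk _ (1 : Localization.AtPrime p))
        = LocalizedModule.mk w s :=
      LocalizedModule.induction_on
        (β := fun z => ∃ w s, z = LocalizedModule.mk w s) (fun m s => ⟨m, s, rfl⟩) _
    replace h1 : (LocalizedModule.map p.primeCompl i)
        (h (Ideal.Quotient.mk _ (1 : Localization.AtPrime p))) = LocalizedModule.mk (y : E) 1 := h1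
    rw [hws, LocalizedModule.map_mk, LocalizedModule.mk_eq] at h1
    obtain ⟨u, hu⟩ := h1
    simp only [Submonoid.smul_def, one_smul, OneMemClass.coe_one] at hu
    -- hu : (u : R) • i w = (u : R) • (s : R) • y
    have hz : ((u : R) * (s : R)) • (y : E) ∈ LinearMap.range i := by
      refine ⟨(u : R) • w, ?_⟩
      rw [i.map_smul, hu, smul_smul]
    have hzN : ((u : R) * (s : R)) • (y : E) ∈ N := N.smul_mem _ y.2
    have hz0 : ((u : R) * (s : R)) • (y : E) ≠ 0 := by
      intro h0
      exact (u * s).2 ((hmem _).mpr h0)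
    exact (Submodule.ne_bot_iff _).mpr ⟨_, Submodule.mem_inf.mpr ⟨hzN, hz⟩, hz0⟩
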